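/- Let M ⊆ ℝ³ be a finite set such that for every nonempty subset S ⊆ M there exist a coordinate index i ∈ {1,2,3} and a real value c such that exactly one point of S has its i-th coordinate equal to c. Then M is basic. -/

import Mathlib

/-- A set `M ⊆ ℝ³` is *basic* if every real-valued function on `M` decomposes as a sum of
functions of the three separate coordinates. -/
def IsBasic (M : Set (Fin 3 → ℝ)) : Prop :=
  ∀ f : (Fin 3 → ℝ) → ℝ, ∃ f₁ f₂ f₃ : ℝ → ℝ,
    ∀ p ∈ M, f p = f₁ (p 0) + f₂ (p 1) + f₃ (p 2)

lemma basic_aux : ∀ n : ℕ, ∀ M : Set (Fin 3 → ℝ), M.Finite → M.ncard ≤ n →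
    (∀ S ⊆ M, S.Nonempty → ∃ (i : Fin 3) (c : ℝ), ∃! p, p ∈ S ∧ p i = c) →
    IsBasic M := by
  intro n
  induction n with
  | zero =>
    intro M hfin hcard _ f
    have : M = ∅ := by
      rw [← Set.ncard_eq_zero hfin]; omega
    subst this
    exact ⟨0, 0, 0, fun p hp => absurd hp (Set.notMem_empty p)⟩
  | succ n ih =>
    intro M hfin hcard h
    rcases M.eq_empty_or_nonempty with rfl | hne
    · exact fun f => ⟨0, 0, 0, fun p hp => absurd hp (Set.notMem_empty p)⟩
    · obtain ⟨i, c, p, ⟨hpM, hpc⟩, huniq⟩ := h M subset_rfl hne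
      set M' := M \ {p} with hM'
      have hfin' : M'.Finite := hfin.diff
      have hcard' : M'.ncard ≤ n := by
        rw [hM']
        have := Set.ncard_diff_singleton_lt_of_mem hpM hfin
        omega
      have hIB := ih M' hfin' hcard'
        (fun S hS hSne => h S (hS.trans Set.diff_subset) hSne)
      intro f
      obtain ⟨g₁, g₂, g₃, hg⟩ := hIB f
      have hne' : ∀ q ∈ M', q i ≠ c := by
        intro q hq hqc
        exact hq.2 (huniq q ⟨hq.1, hqc⟩)
      fin_cases i
      · replace hpc : p 0 = c := hpc
        replace hne' : ∀ q ∈ M', q 0 ≠ c := hne'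
        refine ⟨Function.update g₁ c (f p - g₂ (p 1) - g₃ (p 2)), g₂, g₃, ?_⟩
        intro q hq
        rcases eq_or_ne q p with rfl | hqp
        · rw [hpc, Function.update_self]; ring
        · have hq' : q ∈ M' := ⟨hq, hqp⟩
          rw [Function.update_of_ne (hne' q hq'), ← hg q hq']
      · replace hpc : p 1 = c := hpc
        replace hne' : ∀ q ∈ M', q 1 ≠ c := hne'
        refine ⟨g₁, Function.update g₂ c (f p - g₁ (p 0) - g₃ (p 2)), g₃, ?_⟩
        intro q hq
        rcases eq_or_ne q p with rfl | hqp
        · rw [hpc, Function.update_self]; ring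
        · have hq' : q ∈ M' := ⟨hq, hqp⟩
          rw [Function.update_of_ne (hne' q hq'), ← hg q hq']
      · replace hpc : p 2 = c := hpc
        replace hne' : ∀ q ∈ M', q 2 ≠ c := hne'
        refine ⟨g₁, g₂, Function.update g₃ c (f p - g₁ (p 0) - g₂ (p 1)), ?_⟩
        intro q hq
        rcases eq_or_ne q p with rfl | hqp
        · rw [hpc, Function.update_self]; ring
        · have hq' : q ∈ M' := ⟨hq, hqp⟩
          rw [Function.update_of_ne (hne' q hq'), ← hg q hq']

/-- If every nonempty subset `S` of a finite set `M ⊆ ℝ³` has a layer containing exactly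
one point of `S`, then `M` is basic. -/
theorem basic_of_layers_separate (M : Set (Fin 3 → ℝ)) (hfin : M.Finite)
    (h : ∀ S ⊆ M, S.Nonempty → ∃ (i : Fin 3) (c : ℝ), ∃! p, p ∈ S ∧ p i = c) :
    IsBasic M := by
  exact basic_aux M.ncard M hfin le_rfl h
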